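/- With θ defined by sin θ = √(σ²/(2P−δ+σ²)) and d_n = V_n(√(n(2P+2δ)))·sin^n θ, the rate R_n = (1/n)·log₂(V_n(√(nP))/(8 d_n)) satisfies liminf_{n→∞} R_n ≥ (1/2)·log₂(P/(2P+2δ) + ((2P−δ)/(2P+2δ))·(P/σ²)); consequently, for every ε > 0 one can choose δ > 0 small enough that R_n ≥ (1/2)·log₂(1/2 + P/σ²) − ε for all sufficiently large n. -/

import Mathlib

open Filter Real

/-- With `θ(δ)` given by `sin θ = √(σ²/(2P−δ+σ²))` and
`d_n(δ) = V_n(√(n(2P+2δ)))·sinⁿθ(δ)`, the rate `R_n(δ) = (1/n)log₂(V_n(√(nP))/(8 d_n(δ)))`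
satisfies `liminf_n R_n(δ) ≥ (1/2)log₂(P/(2P+2δ) + ((2P−δ)/(2P+2δ))·(P/σ²))`; consequently,
for every `ε > 0` there is `δ ∈ (0, 2P)` with `R_n(δ) ≥ (1/2)log₂(1/2 + P/σ²) − ε` for all
sufficiently large `n`. -/
theorem min_angle_rate_bound (P σ2 : ℝ) (hP : 0 < P) (hσ : 0 < σ2)
    (Vn : ℕ → ℝ → ℝ)
    (hVn : ∀ (n : ℕ) (ρ : ℝ), Vn n ρ = Real.pi ^ ((n : ℝ)/2) * ρ ^ n / Real.Gamma ((n : ℝ)/2 + 1))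
    (θ : ℝ → ℝ)
    (hθ : ∀ δ : ℝ, θ δ = Real.arcsin (Real.sqrt (σ2 / (2*P - δ + σ2))))
    (dn : ℝ → ℕ → ℝ)
    (hdn : ∀ (δ : ℝ) (n : ℕ),
      dn δ n = Vn n (Real.sqrt ((n : ℝ) * (2*P + 2*δ))) * Real.sin (θ δ) ^ n)
    (R : ℝ → ℕ → ℝ)
    (hR : ∀ (δ : ℝ) (n : ℕ),
      R δ n = (1 / (n : ℝ)) * Real.logb 2 (Vn n (Real.sqrt ((n : ℝ) * P)) / (8 * dn δ n))) :
    (∀ δ : ℝ, 0 < δ → δ < 2*P →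
      (1/2) * Real.logb 2 (P/(2*P + 2*δ) + ((2*P - δ)/(2*P + 2*δ)) * (P/σ2))
        ≤ Filter.liminf (fun n : ℕ => R δ n) atTop) ∧
    (∀ ε : ℝ, 0 < ε → ∃ δ : ℝ, 0 < δ ∧ δ < 2*P ∧
      ∀ᶠ n : ℕ in atTop, (1/2) * Real.logb 2 (1/2 + P/σ2) - ε ≤ R δ n) := by
  -- exact formula for R δ n, for n ≥ 1
  have hRf : ∀ δ : ℝ, 0 < δ → δ < 2*P → ∀ n : ℕ, 1 ≤ n →
      R δ n = (1/2) * Real.logb 2 (P/(2*P + 2*δ) + ((2*P - δ)/(2*P + 2*δ)) * (P/σ2))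
        - 3 / (n : ℝ) := by
    intro δ hδ hδ2 n hn
    have h1 : 0 < 2*P - δ + σ2 := by linarith
    have h2 : 0 < 2*P + 2*δ := by linarith
    have hnR : (0:ℝ) < (n : ℝ) := by exact_mod_cast hn
    set A : ℝ := P * (2*P - δ + σ2) / ((2*P + 2*δ) * σ2) with hAdef
    have hApos : 0 < A := by positivity
    have hAeq : A = P/(2*P + 2*δ) + ((2*P - δ)/(2*P + 2*δ)) * (P/σ2) := by
      rw [hAdef]; field_simp; ring
    have hs : Real.sin (θ δ) = Real.sqrt (σ2 / (2*P - δ + σ2)) := by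
      rw [hθ]
      apply Real.sin_arcsin
      · exact le_trans (by norm_num) (Real.sqrt_nonneg _)
      · rw [show (1:ℝ) = Real.sqrt 1 by simp]
        apply Real.sqrt_le_sqrt
        rw [div_le_one h1]; linarith
    have hspos : 0 < Real.sin (θ δ) := by
      rw [hs]; positivity
    have hkey : Real.sqrt ((n:ℝ) * P)
        = Real.sqrt A * (Real.sqrt ((n:ℝ) * (2*P + 2*δ)) * Real.sin (θ δ)) := by
      rw [hs, ← Real.sqrt_mul (by positivity : (0:ℝ) ≤ (n:ℝ) * (2*P + 2*δ)),
        ← Real.sqrt_mul hApos.le]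
      congr 1
      rw [hAdef]
      field_simp [h1.ne', h2.ne', hσ.ne']
      ring_nf
      have h1'' : P*2 - δ + σ2 ≠ 0 := by linarith
      rw [show P * (P*2-δ+σ2)⁻¹ * 2 - δ * (P*2-δ+σ2)⁻¹ + σ2 * (P*2-δ+σ2)⁻¹
        = (P*2-δ+σ2) * (P*2-δ+σ2)⁻¹ by ring, mul_inv_cancel₀ h1'']
    have hΓ : 0 < Real.Gamma ((n:ℝ)/2 + 1) := Real.Gamma_pos_of_pos (by positivity)
    have hπ : 0 < Real.pi ^ ((n:ℝ)/2) := Real.rpow_pos_of_pos Real.pi_pos _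
    have hXpos : 0 < Real.sqrt ((n:ℝ) * (2*P + 2*δ)) := Real.sqrt_pos.mpr (by positivity)
    have hratio : Vn n (Real.sqrt ((n:ℝ) * P)) / (8 * dn δ n)
        = Real.sqrt A ^ n / 8 := by
      rw [hdn, hVn, hVn, hkey, mul_pow, mul_pow]
      field_simp
    have hAs : 0 < Real.sqrt A := Real.sqrt_pos.mpr hApos
    have hlog : Real.logb 2 (Real.sqrt A ^ n / 8)
        = (n : ℝ) * (Real.logb 2 A / 2) - 3 := by
      rw [Real.logb_div (by positivity) (by norm_num), Real.logb_pow,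
        show (8:ℝ) = 2^(3:ℕ) by norm_num, Real.logb_pow, Real.logb_self_eq_one (by norm_num), Real.logb, Real.log_sqrt hApos.le, Real.logb]
      push_cast
      ring
    rw [hR, hratio, hlog, ← hAeq]
    field_simp
  constructor
  · intro δ hδ hδ2
    have htend : Tendsto (fun n : ℕ => R δ n) atTop
        (nhds ((1/2) * Real.logb 2 (P/(2*P + 2*δ) + ((2*P - δ)/(2*P + 2*δ)) * (P/σ2)))) := by
      have h1 : Tendsto (fun n : ℕ =>
          (1/2) * Real.logb 2 (P/(2*P + 2*δ) + ((2*P - δ)/(2*P + 2*δ)) * (P/σ2)) - 3 / (n:ℝ))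
          atTop (nhds ((1/2) * Real.logb 2 (P/(2*P + 2*δ) + ((2*P - δ)/(2*P + 2*δ)) * (P/σ2)) - 0)) :=
        tendsto_const_nhds.sub (tendsto_const_div_atTop_nhds_zero_nat 3)
      rw [sub_zero] at h1
      apply h1.congr'
      filter_upwards [eventually_ge_atTop 1] with n hn
      rw [hRf δ hδ hδ2 n hn]
    rw [htend.liminf_eq]
  · intro ε hε
    set g : ℝ → ℝ := fun δ =>
      (1/2) * Real.logb 2 (P/(2*P + 2*δ) + ((2*P - δ)/(2*P + 2*δ)) * (P/σ2)) with hg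
    have harg0 : P/(2*P + 2*(0:ℝ)) + ((2*P - 0)/(2*P + 2*0)) * (P/σ2) = 1/2 + P/σ2 := by
      field_simp
      ring
    have hg0 : g 0 = (1/2) * Real.logb 2 (1/2 + P/σ2) := by
      rw [hg]; simp only; rw [harg0]
    have hfc : ContinuousAt (fun δ : ℝ =>
        P/(2*P + 2*δ) + ((2*P - δ)/(2*P + 2*δ)) * (P/σ2)) 0 := by
      have hden : (2*P + 2*(0:ℝ)) ≠ 0 := by simp; linarith
      apply ContinuousAt.add
      · exact continuousAt_const.div (by fun_prop) hden
      · exact (((by fun_prop : ContinuousAt (fun δ : ℝ => 2*P - δ) 0).div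
          (by fun_prop) hden)).mul continuousAt_const
    have hfne : P/(2*P + 2*(0:ℝ)) + ((2*P - 0)/(2*P + 2*0)) * (P/σ2) ≠ 0 := by
      rw [harg0]; positivity
    have hcont : ContinuousAt g 0 := by
      apply continuousAt_const.mul
      exact ContinuousAt.comp (g := Real.logb 2) (Real.continuousAt_logb hfne) hfc
    rw [Metric.continuousAt_iff] at hcont
    obtain ⟨r, hr, hball⟩ := hcont (ε/2) (by linarith)
    refine ⟨min (r/2) P, lt_min (by linarith) hP, lt_of_le_of_lt (min_le_right _ _) (by linarith), ?_⟩
    have hδd : dist (min (r/2) P) (0:ℝ) < r := by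
      rw [Real.dist_eq, sub_zero, abs_of_pos (lt_min (by linarith) hP)]
      calc min (r/2) P ≤ r/2 := min_le_left _ _
        _ < r := by linarith
    have hgδ : |g (min (r/2) P) - g 0| < ε/2 := by
      have := hball hδd
      rwa [Real.dist_eq] at this
    have hev : ∀ᶠ n : ℕ in atTop, 3 / (n:ℝ) < ε/2 := by
      have := tendsto_const_div_atTop_nhds_zero_nat (3:ℝ)
      exact this.eventually_lt_const (by linarith)
    filter_upwards [hev, eventually_ge_atTop 1] with n h3 hn
    rw [hRf (min (r/2) P) (lt_min (by linarith) hP)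
      (lt_of_le_of_lt (min_le_right _ _) (by linarith)) n hn]
    have h1 : g 0 - ε/2 ≤ g (min (r/2) P) := by
      have := abs_lt.mp hgδ
      linarith [this.1]
    rw [hg0] at h1
    have : g (min (r/2) P) = (1/2) * Real.logb 2 (P/(2*P + 2*(min (r/2) P))
        + ((2*P - min (r/2) P)/(2*P + 2*(min (r/2) P))) * (P/σ2)) := rfl
    linarith [this ▸ h1]
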